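/- Fix T ∈ ℕ, x₀ ∈ ℝ, and a noise schedule β : ℕ → ℝ with 0 < β_s < 1 for all 1 ≤ s ≤ T. On some probability space let (ε_s)_{s=1}^{T} be independent random variables, each with law gaussianReal 0 1 (the standard Gaussian on ℝ). Define the forward diffusion chain X₀ = x₀ and X_s = √(1 − β_s) · X_{s−1} + √(β_s) · ε_s for 1 ≤ s ≤ T. Then for every 0 ≤ t ≤ T, the law of X_t is gaussianReal (√(ᾱ_t) · x₀) (1 − ᾱ_t), where ᾱ_t = ∏_{s=1}^{t} (1 − β_s). -/

import Mathlib

open MeasureTheory ProbabilityTheory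

open scoped ENNReal NNReal Real

namespace DDPMAux

open Real


lemma sqrt_const_aux {a b : ℝ} (ha : 0 < a) (hb : 0 < b) :
    (Real.sqrt (2 * π * a))⁻¹ * (Real.sqrt (2 * π * b))⁻¹
      * Real.sqrt (π / ((a + b) / (2 * a * b)))
      = (Real.sqrt (2 * π * (a + b)))⁻¹ := by
  have hs : (0:ℝ) < a + b := by linarith
  have hpi := Real.pi_pos
  have h1 : Real.sqrt (2 * π * a) * Real.sqrt (2 * π * b)
      = Real.sqrt (2 * π * (a + b)) * Real.sqrt (π / ((a + b) / (2 * a * b))) := by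
    rw [← Real.sqrt_mul (by positivity), ← Real.sqrt_mul (by positivity)]
    congr 1
    field_simp
  have hA : (0:ℝ) < Real.sqrt (2 * π * a) := Real.sqrt_pos.2 (by positivity)
  have hB : (0:ℝ) < Real.sqrt (2 * π * b) := Real.sqrt_pos.2 (by positivity)
  have hS : (0:ℝ) < Real.sqrt (2 * π * (a + b)) := Real.sqrt_pos.2 (by positivity)
  have hC : (0:ℝ) ≤ Real.sqrt (π / ((a + b) / (2 * a * b))) := Real.sqrt_nonneg _
  rw [eq_comm, inv_eq_iff_eq_inv, eq_comm]
  rw [mul_inv, mul_inv, inv_inv, inv_inv]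
  field_simp
  have hpq : π / ((a + b) / (2 * a * b)) = 2 * π * a * b / (a + b) := by field_simp
  rw [hpq] at h1
  linarith [h1]

lemma gaussianPDFReal_conv (m₁ m₂ : ℝ) {v₁ v₂ : ℝ≥0} (h₁ : v₁ ≠ 0) (h₂ : v₂ ≠ 0) (x : ℝ) :
    ∫ y, gaussianPDFReal m₁ v₁ y * gaussianPDFReal m₂ v₂ (x - y)
      = gaussianPDFReal (m₁ + m₂) (v₁ + v₂) x := by
  have ha : 0 < (v₁ : ℝ) := by exact_mod_cast zero_lt_iff.mpr h₁
  have hb : 0 < (v₂ : ℝ) := by exact_mod_cast zero_lt_iff.mpr h₂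
  set a : ℝ := (v₁ : ℝ)
  set b : ℝ := (v₂ : ℝ)
  have hs : (0:ℝ) < a + b := by linarith
  set q : ℝ := (a + b) / (2 * a * b) with hq
  have hqpos : 0 < q := by positivity
  set c : ℝ := (b * m₁ + a * (x - m₂)) / (a + b) with hc
  set K : ℝ := (Real.sqrt (2 * π * a))⁻¹ * (Real.sqrt (2 * π * b))⁻¹
      * Real.exp (-(x - (m₁ + m₂))^2 / (2 * (a + b))) with hK
  have key : ∀ y, gaussianPDFReal m₁ v₁ y * gaussianPDFReal m₂ v₂ (x - y)
      = K * Real.exp (-q * (y - c)^2) := by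
    intro y
    have hexp : -(y - m₁)^2 / (2 * a) + -(x - y - m₂)^2 / (2 * b)
        = -(x - (m₁ + m₂))^2 / (2 * (a + b)) + -q * (y - c)^2 := by
      rw [hq, hc]
      field_simp
      ring
    simp only [gaussianPDFReal, hK]
    calc (Real.sqrt (2 * π * a))⁻¹ * Real.exp (-(y - m₁)^2 / (2 * a))
          * ((Real.sqrt (2 * π * b))⁻¹ * Real.exp (-(x - y - m₂)^2 / (2 * b)))
        = (Real.sqrt (2 * π * a))⁻¹ * (Real.sqrt (2 * π * b))⁻¹
          * Real.exp (-(y - m₁)^2 / (2 * a) + -(x - y - m₂)^2 / (2 * b)) := by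
          rw [Real.exp_add]; ring
      _ = (Real.sqrt (2 * π * a))⁻¹ * (Real.sqrt (2 * π * b))⁻¹
          * Real.exp (-(x - (m₁ + m₂))^2 / (2 * (a + b))) * Real.exp (-q * (y - c)^2) := by
          rw [hexp, Real.exp_add]; ring
  rw [integral_congr_ae (Filter.Eventually.of_forall key)]
  rw [MeasureTheory.integral_const_mul]
  have hint : ∫ y, Real.exp (-q * (y - c)^2) = Real.sqrt (π / q) := by
    rw [integral_sub_right_eq_self (fun y => Real.exp (-q * y^2)) c]
    exact integral_gaussian q
  rw [hint]
  simp only [gaussianPDFReal, NNReal.coe_add]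
  calc K * Real.sqrt (π / q)
      = (Real.sqrt (2 * π * a))⁻¹ * (Real.sqrt (2 * π * b))⁻¹ * Real.sqrt (π / q)
        * Real.exp (-(x - (m₁ + m₂))^2 / (2 * (a + b))) := by rw [hK]; ring
    _ = (Real.sqrt (2 * π * (a + b)))⁻¹ * Real.exp (-(x - (m₁ + m₂))^2 / (2 * (a + b))) := by
        rw [hq, sqrt_const_aux ha hb]

lemma gaussianPDF_conv (m₁ m₂ : ℝ) {v₁ v₂ : ℝ≥0} (h₁ : v₁ ≠ 0) (h₂ : v₂ ≠ 0) (z : ℝ) :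
    ∫⁻ y, gaussianPDF m₁ v₁ y * gaussianPDF m₂ v₂ (z - y)
      = gaussianPDF (m₁ + m₂) (v₁ + v₂) z := by
  have hnn : ∀ y, 0 ≤ gaussianPDFReal m₁ v₁ y * gaussianPDFReal m₂ v₂ (z - y) :=
    fun y => mul_nonneg (gaussianPDFReal_nonneg _ _ _) (gaussianPDFReal_nonneg _ _ _)
  have hint : Integrable (fun y => gaussianPDFReal m₁ v₁ y * gaussianPDFReal m₂ v₂ (z - y)) := by
    have h2 : Integrable (fun y => gaussianPDFReal m₂ v₂ (z - y)) :=
      (integrable_gaussianPDFReal m₂ v₂).comp_sub_left z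
    refine Integrable.bdd_mul (c := (Real.sqrt (2 * π * v₁))⁻¹) h2
      (stronglyMeasurable_gaussianPDFReal m₁ v₁).aestronglyMeasurable ?_
    refine Filter.Eventually.of_forall fun y => ?_
    rw [Real.norm_eq_abs, abs_of_nonneg (gaussianPDFReal_nonneg _ _ _), gaussianPDFReal]
    have : Real.exp (-(y - m₁)^2 / (2 * v₁)) ≤ 1 := by
      rw [Real.exp_le_one_iff]
      exact div_nonpos_of_nonpos_of_nonneg (neg_nonpos.mpr (sq_nonneg _)) (by positivity)
    have hnn' : (0:ℝ) ≤ (Real.sqrt (2 * π * v₁))⁻¹ := by positivity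
    calc (Real.sqrt (2 * π * v₁))⁻¹ * Real.exp (-(y - m₁)^2 / (2 * v₁))
        ≤ (Real.sqrt (2 * π * v₁))⁻¹ * 1 := mul_le_mul_of_nonneg_left this hnn'
      _ = (Real.sqrt (2 * π * v₁))⁻¹ := mul_one _
  calc ∫⁻ y, gaussianPDF m₁ v₁ y * gaussianPDF m₂ v₂ (z - y)
      = ∫⁻ y, ENNReal.ofReal (gaussianPDFReal m₁ v₁ y * gaussianPDFReal m₂ v₂ (z - y)) := by
        simp_rw [gaussianPDF, ENNReal.ofReal_mul (gaussianPDFReal_nonneg m₁ v₁ _)]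
    _ = ENNReal.ofReal (∫ y, gaussianPDFReal m₁ v₁ y * gaussianPDFReal m₂ v₂ (z - y)) :=
        (ofReal_integral_eq_lintegral_ofReal hint (Filter.Eventually.of_forall hnn)).symm
    _ = gaussianPDF (m₁ + m₂) (v₁ + v₂) z := by
        rw [gaussianPDFReal_conv m₁ m₂ h₁ h₂ z]; rfl

lemma gaussianReal_conv (m₁ m₂ : ℝ) (v₁ v₂ : ℝ≥0) :
    Measure.conv (gaussianReal m₁ v₁) (gaussianReal m₂ v₂) = gaussianReal (m₁ + m₂) (v₁ + v₂) := by
  by_cases h₁ : v₁ = 0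
  · subst h₁
    rw [gaussianReal_zero_var, Measure.conv, Measure.dirac_prod,
      Measure.map_map measurable_add measurable_prodMk_left]
    have : ((fun p : ℝ × ℝ => p.1 + p.2) ∘ Prod.mk m₁) = (m₁ + ·) := rfl
    rw [this, gaussianReal_map_const_add, add_comm m₂ m₁, zero_add]
  by_cases h₂ : v₂ = 0
  · subst h₂
    rw [gaussianReal_zero_var, Measure.conv, Measure.prod_dirac,
      Measure.map_map measurable_add measurable_prodMk_right]
    have : ((fun p : ℝ × ℝ => p.1 + p.2) ∘ (fun x => (x, m₂))) = (· + m₂) := rfl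
    rw [this, gaussianReal_map_add_const, add_zero]
  -- main case
  have hne : v₁ + v₂ ≠ 0 := by simp [h₁]
  rw [gaussianReal_of_var_ne_zero _ h₁, gaussianReal_of_var_ne_zero _ h₂,
    gaussianReal_of_var_ne_zero _ hne]
  set f := gaussianPDF m₁ v₁ with hf
  set g := gaussianPDF m₂ v₂ with hg
  have hfm : Measurable f := measurable_gaussianPDF _ _
  have hgm : Measurable g := measurable_gaussianPDF _ _
  have hftop : ∀ x, f x ≠ ⊤ := fun x => ENNReal.ofReal_ne_top
  ext s hs
  have hind : Measurable (s.indicator (fun _ => (1:ℝ≥0∞))) := measurable_const.indicator hs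
  have hindtop : ∀ z, s.indicator (fun _ => (1:ℝ≥0∞)) z ≠ ⊤ := by
    intro z; by_cases h : z ∈ s <;> simp [Set.indicator, h]
  rw [Measure.conv, Measure.map_apply measurable_add hs,
    Measure.prod_apply (measurable_add hs), withDensity_apply _ hs]
  have step1 : ∀ x : ℝ, (volume.withDensity g) (Prod.mk x ⁻¹' ((fun p : ℝ × ℝ => p.1 + p.2) ⁻¹' s))
      = ∫⁻ y, s.indicator (fun _ => (1:ℝ≥0∞)) (x + y) * g y := by
    intro x
    have hmeas : MeasurableSet {y : ℝ | x + y ∈ s} := (measurable_const_add x) hs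
    rw [show Prod.mk x ⁻¹' ((fun p : ℝ × ℝ => p.1 + p.2) ⁻¹' s) = {y : ℝ | x + y ∈ s} from rfl]
    rw [withDensity_apply _ hmeas, ← lintegral_indicator hmeas]
    congr 1
    funext y
    by_cases hy : x + y ∈ s <;> simp [Set.indicator, hy]
  calc ∫⁻ x, (volume.withDensity g) (Prod.mk x ⁻¹' ((fun p : ℝ × ℝ => p.1 + p.2) ⁻¹' s))
        ∂(volume.withDensity f)
      = ∫⁻ x, (∫⁻ y, s.indicator (fun _ => (1:ℝ≥0∞)) (x + y) * g y) ∂(volume.withDensity f) :=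
        lintegral_congr step1
    _ = ∫⁻ x, f x * ∫⁻ y, s.indicator (fun _ => (1:ℝ≥0∞)) (x + y) * g y := by
        have hmeas2 : Measurable fun x : ℝ => ∫⁻ y, s.indicator (fun _ => (1:ℝ≥0∞)) (x + y) * g y :=
          Measurable.lintegral_prod_right'
            (((hind.comp (measurable_fst.add measurable_snd))).mul (hgm.comp measurable_snd))
        rw [lintegral_withDensity_eq_lintegral_mul volume hfm hmeas2]
        rfl
    _ = ∫⁻ x, f x * ∫⁻ z, s.indicator (fun _ => (1:ℝ≥0∞)) z * g (z - x) := by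
        congr 1
        funext x
        congr 1
        have hmap : (volume : Measure ℝ).map (fun y => x + y) = volume :=
          map_add_left_eq_self volume x
        calc ∫⁻ y, s.indicator (fun _ => (1:ℝ≥0∞)) (x + y) * g y
            = ∫⁻ y, s.indicator (fun _ => (1:ℝ≥0∞)) (x + y) * g ((x + y) - x) := by
              simp_rw [add_sub_cancel_left]
          _ = ∫⁻ z, s.indicator (fun _ => (1:ℝ≥0∞)) z * g (z - x) := by
              conv_rhs => rw [← hmap]
              refine Eq.symm (lintegral_map ?_ (measurable_const_add x))
              exact hind.mul (hgm.comp (measurable_id.sub_const x))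
    _ = ∫⁻ x, ∫⁻ z, f x * (s.indicator (fun _ => (1:ℝ≥0∞)) z * g (z - x)) := by
        congr 1
        funext x
        rw [lintegral_const_mul' _ _ (hftop x)]
    _ = ∫⁻ z, ∫⁻ x, f x * (s.indicator (fun _ => (1:ℝ≥0∞)) z * g (z - x)) := by
        refine lintegral_lintegral_swap ?_
        exact ((hfm.comp measurable_fst).mul
          ((hind.comp measurable_snd).mul
            (hgm.comp (measurable_snd.sub measurable_fst)))).aemeasurable
    _ = ∫⁻ z, s.indicator (fun _ => (1:ℝ≥0∞)) z * ∫⁻ x, f x * g (z - x) := by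
        congr 1
        funext z
        rw [← lintegral_const_mul' _ _ (hindtop z)]
        exact lintegral_congr fun x => by ring
    _ = ∫⁻ z in s, gaussianPDF (m₁ + m₂) (v₁ + v₂) z := by
        rw [← lintegral_indicator hs]
        congr 1
        funext z
        rw [gaussianPDF_conv m₁ m₂ h₁ h₂ z]
        by_cases hz : z ∈ s <;> simp [Set.indicator, hz]

lemma indepFun_add_gaussianReal {Ω : Type*} [MeasurableSpace Ω] {μ : Measure Ω}
    [IsProbabilityMeasure μ] {f g : Ω → ℝ} (hf : Measurable f) (hg : Measurable g)
    (h : IndepFun f g μ) {m₁ m₂ : ℝ} {v₁ v₂ : ℝ≥0}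
    (h₁ : μ.map f = gaussianReal m₁ v₁) (h₂ : μ.map g = gaussianReal m₂ v₂) :
    μ.map (fun ω => f ω + g ω) = gaussianReal (m₁ + m₂) (v₁ + v₂) := by
  have hp := (indepFun_iff_map_prod_eq_prod_map_map hf.aemeasurable hg.aemeasurable).mp h
  have hcomp : (fun ω => f ω + g ω) = (fun p : ℝ × ℝ => p.1 + p.2) ∘ (fun ω => (f ω, g ω)) := rfl
  rw [hcomp, ← Measure.map_map measurable_add (hf.prodMk hg), hp, h₁, h₂]
  exact gaussianReal_conv m₁ m₂ v₁ v₂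

end DDPMAux

open DDPMAux

/-- **Closed-form marginal of the DDPM forward process.**
With `X 0 = x₀` and `X s = √(1 − β s) · X (s−1) + √(β s) · ε s` for
`1 ≤ s ≤ T`, where the `ε s` (`1 ≤ s ≤ T`) are independent standard Gaussians,
the law of `X t` is a Gaussian with mean `√(ᾱ t) · x₀` and variance `1 − ᾱ t`,
where `ᾱ t = ∏_{s=1}^{t} (1 − β s)`. -/
theorem ddpm_forward_marginal
    {Ω : Type*} [MeasurableSpace Ω] (μ : Measure Ω) [IsProbabilityMeasure μ]
    (T : ℕ) (x₀ : ℝ) (β : ℕ → ℝ)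
    (hβ : ∀ s, 1 ≤ s → s ≤ T → 0 < β s ∧ β s < 1)
    (ε : ℕ → Ω → ℝ)
    (hεmeas : ∀ s, Measurable (ε s))
    (hεindep : iIndepFun
      (fun s : Finset.Icc 1 T => ε (s : ℕ)) μ)
    (hεlaw : ∀ s, 1 ≤ s → s ≤ T → μ.map (ε s) = gaussianReal 0 1)
    (X : ℕ → Ω → ℝ)
    (hX0 : X 0 = fun _ => x₀)
    (hXs : ∀ s, 1 ≤ s → s ≤ T →
      X s = fun ω => Real.sqrt (1 - β s) * X (s - 1) ω + Real.sqrt (β s) * ε s ω) :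
    ∀ t ≤ T,
      μ.map (X t) =
        gaussianReal (Real.sqrt (∏ s ∈ Finset.Icc 1 t, (1 - β s)) * x₀)
          (1 - ∏ s ∈ Finset.Icc 1 t, (1 - β s)).toNNReal := by
  -- measurability of the chain
  have hXmeas : ∀ t, t ≤ T → Measurable (X t) := by
    intro t
    induction t with
    | zero => intro _; rw [hX0]; exact measurable_const
    | succ n ih =>
      intro h
      rw [hXs (n+1) (Nat.le_add_left 1 n) h]
      simp only [Nat.add_sub_cancel]
      exact ((ih (le_trans (Nat.le_succ n) h)).const_mul _).add ((hεmeas _).const_mul _)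
  -- independence of X n and ε (n+1)
  have hindep : ∀ n, n + 1 ≤ T → IndepFun (X n) (ε (n+1)) μ := by
    intro n hn
    set S : Finset (Finset.Icc 1 T) := Finset.univ.filter (fun i => (i : ℕ) ≤ n) with hS
    have hjmem : (n+1) ∈ Finset.Icc 1 T := by
      simp only [Finset.mem_Icc]; omega
    set j : (Finset.Icc 1 T : Finset ℕ) := ⟨n+1, hjmem⟩ with hj
    have hdisj : Disjoint S ({j} : Finset (Finset.Icc 1 T)) := by
      rw [Finset.disjoint_singleton_right, hS, Finset.mem_filter]
      push_neg
      intro _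
      simp only [hj]
      omega
    have h1 := hεindep.indepFun_finset S {j} hdisj (fun i => hεmeas _)
    have hrep : ∀ u, u ≤ n → ∃ g : (↥S → ℝ) → ℝ,
        Measurable g ∧ X u = fun ω => g (fun i => ε ((i : { x // x ∈ Finset.Icc 1 T }) : ℕ) ω) := by
      intro u
      induction u with
      | zero => intro _; exact ⟨fun _ => x₀, measurable_const, hX0⟩
      | succ m ih =>
        intro hm
        obtain ⟨g, hgm, hgeq⟩ := ih (le_trans (Nat.le_succ m) hm)
        have hm1T : (m+1) ∈ Finset.Icc 1 T := by simp only [Finset.mem_Icc]; omega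
        have hm1S : (⟨m+1, hm1T⟩ : (Finset.Icc 1 T : Finset ℕ)) ∈ S := by
          rw [hS, Finset.mem_filter]
          exact ⟨Finset.mem_univ _, hm⟩
        refine ⟨fun v => Real.sqrt (1 - β (m+1)) * g v
            + Real.sqrt (β (m+1)) * v ⟨⟨m+1, hm1T⟩, hm1S⟩, ?_, ?_⟩
        · exact (hgm.const_mul _).add ((measurable_pi_apply _).const_mul _)
        · rw [hXs (m+1) (Nat.le_add_left 1 m) (by omega)]
          simp only [Nat.add_sub_cancel]
          funext ω
          rw [hgeq]
    obtain ⟨g, hgm, hgeq⟩ := hrep n le_rfl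
    have hXn : X n = (g ∘ fun ω (i : ↥S) => ε ((i : { x // x ∈ Finset.Icc 1 T }) : ℕ) ω) := by
      funext ω; rw [hgeq]; rfl
    have hεn : ε (n+1) = ((fun v => v ⟨j, Finset.mem_singleton_self j⟩)
        ∘ fun ω (i : ↥({j} : Finset (Finset.Icc 1 T))) => ε ((i : { x // x ∈ Finset.Icc 1 T }) : ℕ) ω) := rfl
    rw [hXn, hεn]
    exact h1.comp hgm (measurable_pi_apply _)
  -- main induction
  intro t
  induction t with
  | zero =>
    intro _
    rw [hX0]
    have h0 : Finset.Icc 1 0 = (∅ : Finset ℕ) := by decide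
    rw [h0]
    simp only [Finset.prod_empty, Real.sqrt_one, one_mul, sub_self, Real.toNNReal_zero,
      gaussianReal_zero_var]
    rw [Measure.map_const]
    simp
  | succ t ih =>
    intro h
    have hT : t ≤ T := le_trans (Nat.le_succ t) h
    have IH := ih hT
    have hβ1 := hβ (t+1) (Nat.le_add_left 1 t) h
    set P : ℝ := ∏ s ∈ Finset.Icc 1 t, (1 - β s) with hP
    have hPpos : 0 < P := Finset.prod_pos fun s hs => by
      rw [Finset.mem_Icc] at hs
      have := hβ s hs.1 (le_trans hs.2 hT)
      linarith [this.2]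
    have hPle : P ≤ 1 := Finset.prod_le_one
      (fun s hs => by
        rw [Finset.mem_Icc] at hs
        have := hβ s hs.1 (le_trans hs.2 hT)
        linarith [this.2])
      (fun s hs => by
        rw [Finset.mem_Icc] at hs
        have := hβ s hs.1 (le_trans hs.2 hT)
        linarith [this.1])
    have hprodsucc : ∏ s ∈ Finset.Icc 1 (t+1), (1 - β s) = P * (1 - β (t+1)) := by
      rw [hP, ← Finset.prod_Icc_succ_top (Nat.le_add_left 1 t)]
    set c : ℝ := Real.sqrt (1 - β (t+1)) with hc
    set d : ℝ := Real.sqrt (β (t+1)) with hd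
    have hc2 : c ^ 2 = 1 - β (t+1) := Real.sq_sqrt (by linarith [hβ1.2])
    have hd2 : d ^ 2 = β (t+1) := Real.sq_sqrt (le_of_lt hβ1.1)
    -- law of c * X t
    have hmap1 : μ.map (fun ω => c * X t ω) =
        gaussianReal (c * (Real.sqrt P * x₀))
          (⟨c^2, sq_nonneg _⟩ * (1 - P).toNNReal) := by
      have : (fun ω => c * X t ω) = (c * ·) ∘ X t := rfl
      rw [this, ← Measure.map_map (measurable_id'.const_mul c) (hXmeas t hT), IH,
        gaussianReal_map_const_mul]
      rfl
    -- law of d * ε (t+1)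
    have hmap2 : μ.map (fun ω => d * ε (t+1) ω) =
        gaussianReal 0 (⟨d^2, sq_nonneg _⟩ * 1) := by
      have : (fun ω => d * ε (t+1) ω) = (d * ·) ∘ ε (t+1) := rfl
      rw [this, ← Measure.map_map (measurable_id'.const_mul d) (hεmeas (t+1)),
        hεlaw (t+1) (Nat.le_add_left 1 t) h, gaussianReal_map_const_mul, mul_zero]
      rfl
    have hind : IndepFun (fun ω => c * X t ω) (fun ω => d * ε (t+1) ω) μ := by
      have := (hindep t h).comp (measurable_id'.const_mul c) (measurable_id'.const_mul d)
      exact this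
    have hsum := indepFun_add_gaussianReal ((hXmeas t hT).const_mul c)
      ((hεmeas (t+1)).const_mul d) hind hmap1 hmap2
    have hXform : X (t+1) = fun ω => c * X t ω + d * ε (t+1) ω := by
      rw [hXs (t+1) (Nat.le_add_left 1 t) h]
      simp only [Nat.add_sub_cancel]
      rfl
    rw [hXform, hsum]
    -- arithmetic
    congr 1
    · rw [add_zero, hprodsucc, hc, Real.sqrt_mul (le_of_lt hPpos), ← mul_assoc,
        mul_comm (Real.sqrt P) (Real.sqrt (1 - β (t+1)))]
    · rw [hprodsucc]
      apply NNReal.coe_injective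
      change ((NNReal.mk (c^2) (sq_nonneg _) * (1 - P).toNNReal
        + NNReal.mk (d^2) (sq_nonneg _) * 1 : ℝ≥0) : ℝ) = _
      push_cast
      rw [Real.coe_toNNReal _ (by linarith : (0:ℝ) ≤ 1 - P),
        Real.coe_toNNReal _ (by nlinarith : (0:ℝ) ≤ 1 - P * (1 - β (t+1)))]
      rw [hc2, hd2]
      ring
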